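/- arXiv:1103.5895 — 2 statements merged into one kernel-verified Lean document; each statement's English description precedes it below -/
import Mathlib

section
/- The number of facets of the cyclic d-polytope with n vertices is f_{d-1}(C(n,d)) = C(n - floor((d+1)/2), n - d) + C(n - floor((d+2)/2), n - d). -/
open Finset

namespace CycAux

def rk (T : Finset ℕ) (t : ℕ) : ℕ := (T.filter (· < t)).card

def cnd (c : ℕ) (T : Finset ℕ) : Prop := ∀ t ∈ T, (t + rk T t) % 2 = c

instance (c : ℕ) : DecidablePred (cnd c) := fun T => by unfold cnd; infer_instance

lemma rk_le_self (A : Finset ℕ) (t : ℕ) : rk A t ≤ t := by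
  have h : A.filter (· < t) ⊆ range t := fun x hx => by
    simp only [mem_filter] at hx; exact mem_range.mpr hx.2
  have := card_le_card h
  rw [card_range] at this
  exact this

lemma rk_lt_card {T : Finset ℕ} {t : ℕ} (ht : t ∈ T) : rk T t + 1 ≤ T.card := by
  have h : insert t (T.filter (· < t)) ⊆ T := by
    intro x hx
    rcases mem_insert.mp hx with rfl | hx
    · exact ht
    · exact (mem_filter.mp hx).1
  have h2 := card_le_card h
  rw [card_insert_of_notMem (by simp [mem_filter])] at h2
  unfold rk
  omega

lemma rk_above {T : Finset ℕ} {N t : ℕ} (hT : T ⊆ range N) (ht : t ∈ T) :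
    t + (T.card - rk T t) ≤ N := by
  have htN : t < N := mem_range.mp (hT ht)
  have h1 : T.filter (fun x => ¬ x < t) ⊆ Ico t N := by
    intro x hx
    simp only [mem_filter, not_lt] at hx
    exact mem_Ico.mpr ⟨hx.2, mem_range.mp (hT hx.1)⟩
  have h2 := card_le_card h1
  rw [Nat.card_Ico] at h2
  have h3 : (T.filter (· < t)).card + (T.filter (fun x => ¬ x < t)).card = T.card :=
    card_filter_add_card_filter_not (s := T) (p := (· < t))
  unfold rk
  omega

lemma rk_lt_rk {T : Finset ℕ} {t t' : ℕ} (ht : t ∈ T) (h : t < t') :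
    rk T t + 1 ≤ rk T t' := by
  have hsub : insert t (T.filter (· < t)) ⊆ T.filter (· < t') := by
    intro x hx
    rcases mem_insert.mp hx with rfl | hx
    · exact mem_filter.mpr ⟨ht, h⟩
    · have h2 := mem_filter.mp hx; exact mem_filter.mpr ⟨h2.1, h2.2.trans h⟩
  have h2 := card_le_card hsub
  rw [card_insert_of_notMem (by simp [mem_filter])] at h2
  unfold rk
  omega

lemma rk_sub {A : Finset ℕ} {s s' : ℕ} (h : s ≤ s') : rk A s' ≤ rk A s + (s' - s) := by
  have hsub : A.filter (· < s') ⊆ (A.filter (· < s)) ∪ Ico s s' := by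
    intro x hx
    have h2 := mem_filter.mp hx
    rcases lt_or_ge x s with hc | hc
    · exact mem_union_left _ (mem_filter.mpr ⟨h2.1, hc⟩)
    · exact mem_union_right _ (mem_Ico.mpr ⟨hc, h2.2⟩)
  have h2 := card_le_card hsub
  have h3 := card_union_le (A.filter (· < s)) (Ico s s')
  rw [Nat.card_Ico] at h3
  unfold rk
  omega

lemma injOn_of_iff {T : Finset ℕ} {f : ℕ → ℕ}
    (hf : ∀ a ∈ T, ∀ b ∈ T, a < b ↔ f a < f b) : Set.InjOn f T := by
  intro a ha b hb hab
  by_contra hne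
  rcases lt_or_gt_of_ne hne with h | h
  · exact absurd hab (Nat.ne_of_lt ((hf a ha b hb).mp h))
  · exact absurd hab.symm (Nat.ne_of_lt ((hf b hb a ha).mp h))

lemma rk_image {T : Finset ℕ} (f : ℕ → ℕ)
    (hf : ∀ a ∈ T, ∀ b ∈ T, a < b ↔ f a < f b) {t : ℕ} (ht : t ∈ T) :
    rk (T.image f) (f t) = rk T t := by
  have hinj : Set.InjOn f T := injOn_of_iff hf
  have heq : (T.image f).filter (· < f t) = (T.filter (· < t)).image f := by
    ext y
    simp only [mem_filter, mem_image]
    constructor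
    · rintro ⟨⟨a, ha, rfl⟩, hlt⟩
      exact ⟨a, ⟨ha, (hf a ha t ht).mpr hlt⟩, rfl⟩
    · rintro ⟨a, ⟨ha, hat⟩, rfl⟩
      exact ⟨⟨a, ha, rfl⟩, (hf a ha t ht).mp hat⟩
  rw [rk, heq, card_image_of_injOn (hinj.mono (by
    intro x hx; exact (mem_filter.mp hx).1))]
  rfl

lemma monoF {c : ℕ} {T : Finset ℕ} (hcnd : cnd c T) :
    ∀ a ∈ T, ∀ b ∈ T, a < b ↔ (a + rk T a) / 2 < (b + rk T b) / 2 := by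
  intro a ha b hb
  constructor
  · intro hab
    have h1 := rk_lt_rk ha hab
    omega
  · intro hab
    by_contra hle
    rcases lt_or_eq_of_le (not_lt.mp hle) with h | h
    · have h1 := rk_lt_rk hb h
      omega
    · subst h; omega

lemma monoG {c : ℕ} {A : Finset ℕ} :
    ∀ a ∈ A, ∀ b ∈ A, a < b ↔ 2 * a + c - rk A a < 2 * b + c - rk A b := by
  intro a ha b hb
  constructor
  · intro hab
    have h1 := rk_sub (A := A) (le_of_lt hab)
    have h2 := rk_le_self A a
    omega
  · intro hab
    by_contra hle
    rcases lt_or_eq_of_le (not_lt.mp hle) with h | h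
    · have h1 := rk_sub (A := A) (le_of_lt h)
      have h2 := rk_le_self A b
      omega
    · subst h; omega

lemma count_par (N m c : ℕ) (hc : c ≤ 1) (hm : 1 ≤ m) :
    (((range N).powersetCard m).filter (cnd c)).card = ((N + m - c) / 2).choose m := by
  set K := (N + m - c) / 2 with hK
  rw [← card_range K, ← card_powersetCard]
  apply card_bij' (fun T _ => T.image (fun t => (t + rk T t) / 2))
    (fun A _ => A.image (fun s => 2 * s + c - rk A s))
  · -- left inverse : G (F T) = T
    intro T hT
    simp only [mem_filter, mem_powersetCard] at hT
    obtain ⟨⟨hsub, hcard⟩, hcnd⟩ := hT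
    rw [image_image]
    have hid : ∀ t ∈ T,
        ((fun s => 2 * s + c - rk (T.image (fun t => (t + rk T t) / 2)) s) ∘
          (fun t => (t + rk T t) / 2)) t = id t := by
      intro t ht
      have hr := rk_image _ (monoF hcnd) ht
      have h3 := hcnd t ht
      simp only [Function.comp, id]
      omega
    rw [image_congr hid, image_id]
  · -- right inverse : F (G A) = A
    intro A hA
    rw [mem_powersetCard] at hA
    obtain ⟨hsub, hcard⟩ := hA
    rw [image_image]
    have hid : ∀ s ∈ A,
        ((fun t => (t + rk (A.image (fun s => 2 * s + c - rk A s)) t) / 2) ∘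
          (fun s => 2 * s + c - rk A s)) s = id s := by
      intro s hs
      have hr := rk_image _ (monoG (c := c)) hs
      have h2 := rk_le_self A s
      simp only [Function.comp, id]
      omega
    rw [image_congr hid, image_id]


  · -- hi : F T ∈ powersetCard m (range K)
    intro T hT
    simp only [mem_filter, mem_powersetCard] at hT
    obtain ⟨⟨hsub, hcard⟩, hcnd⟩ := hT
    rw [mem_powersetCard]
    constructor
    · intro y hy
      rw [mem_image] at hy
      obtain ⟨t, ht, rfl⟩ := hy
      have h1 := rk_above hsub ht
      have h2 := rk_lt_card ht
      have h3 := hcnd t ht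
      rw [mem_range]
      omega
    · rw [card_image_of_injOn (injOn_of_iff (monoF hcnd)), hcard]
  · -- hj : G A ∈ filter (cnd c) (powersetCard m (range N))
    intro A hA
    rw [mem_powersetCard] at hA
    obtain ⟨hsub, hcard⟩ := hA
    rw [mem_filter, mem_powersetCard]
    refine ⟨⟨?_, ?_⟩, ?_⟩
    · intro y hy
      rw [mem_image] at hy
      obtain ⟨s, hs, rfl⟩ := hy
      have h1 := rk_above hsub hs
      have h2 := rk_lt_card hs
      have h3 := rk_le_self A s
      rw [mem_range]
      omega
    · rw [card_image_of_injOn (injOn_of_iff (monoG (c := c))), hcard]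
    · intro y hy
      rw [mem_image] at hy
      obtain ⟨s, hs, rfl⟩ := hy
      have hr := rk_image _ (monoG (c := c)) hs
      have h2 := rk_le_self A s
      omega

def pall (T : Finset ℕ) : Prop := ∀ t ∈ T, ∀ t' ∈ T, (t + rk T t) % 2 = (t' + rk T t') % 2

instance : DecidablePred pall := fun T => by unfold pall; infer_instance

lemma count_all (N m : ℕ) (hm : 1 ≤ m) :
    (((range N).powersetCard m).filter pall).card
      = ((N + m) / 2).choose m + ((N + m - 1) / 2).choose m := by
  have hsplit : ((range N).powersetCard m).filter pall
      = (((range N).powersetCard m).filter (cnd 0)) ∪ (((range N).powersetCard m).filter (cnd 1)) := by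
    rw [← filter_or]
    apply filter_congr
    intro T hT
    rw [mem_powersetCard] at hT
    have hne : T.Nonempty := card_pos.mp (by omega)
    obtain ⟨t0, ht0⟩ := hne
    constructor
    · intro hP
      have h2 : (t0 + rk T t0) % 2 = 0 ∨ (t0 + rk T t0) % 2 = 1 := by omega
      rcases h2 with h2 | h2
      · exact Or.inl (fun t ht => (hP t ht t0 ht0).trans h2)
      · exact Or.inr (fun t ht => (hP t ht t0 ht0).trans h2)
    · rintro (hc | hc) t ht t' ht'
      · rw [hc t ht, hc t' ht']
      · rw [hc t ht, hc t' ht']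
  have hdisj : Disjoint (((range N).powersetCard m).filter (cnd 0))
      (((range N).powersetCard m).filter (cnd 1)) := by
    rw [disjoint_left]
    intro T hT0 hT1
    rw [mem_filter, mem_powersetCard] at hT0 hT1
    have hne : T.Nonempty := card_pos.mp (by omega)
    obtain ⟨t0, ht0⟩ := hne
    have := hT0.2 t0 ht0
    have := hT1.2 t0 ht0
    omega
  rw [hsplit, card_union_of_disjoint hdisj, count_par N m 0 (by omega) hm,
    count_par N m 1 (by omega) hm, Nat.sub_zero]

section FinBridge

variable {n : ℕ}

lemma rk_map (T : Finset (Fin n)) (i : Fin n) :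
    rk (T.image (fun x : Fin n => (x : ℕ))) (i : ℕ) = (T.filter (· < i)).card := by
  have heq : (T.image (fun x : Fin n => (x : ℕ))).filter (· < (i : ℕ))
      = (T.filter (· < i)).image (fun x : Fin n => (x : ℕ)) := by
    ext y
    simp only [mem_filter, mem_image]
    constructor
    · rintro ⟨⟨a, ha, rfl⟩, hlt⟩
      exact ⟨a, ⟨ha, hlt⟩, rfl⟩
    · rintro ⟨a, ⟨ha, hat⟩, rfl⟩
      exact ⟨⟨a, ha, rfl⟩, hat⟩
  rw [rk, heq, card_image_of_injective _ Fin.val_injective]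

lemma image_val_attachFin (A : Finset ℕ) (h : ∀ x ∈ A, x < n) :
    (A.attachFin h).image (fun x : Fin n => (x : ℕ)) = A := by
  ext a
  simp only [mem_image]
  constructor
  · rintro ⟨x, hx, rfl⟩
    exact (mem_attachFin h).mp hx
  · intro ha
    exact ⟨⟨a, h a ha⟩, (mem_attachFin h).mpr ha, rfl⟩

lemma pair_iff (S : Finset (Fin n)) {i j : Fin n} (hi : i ∉ S) (hj : j ∉ S) (hij : i < j) :
    Even ((S.filter (fun k => i < k ∧ k < j)).card) ↔
      ((i : ℕ) + (Sᶜ.filter (· < i)).card) % 2 = ((j : ℕ) + (Sᶜ.filter (· < j)).card) % 2 := by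
  have hI1 : (S.filter (fun k => i < k ∧ k < j)).card
      + (Sᶜ.filter (fun k => i < k ∧ k < j)).card = (j : ℕ) - (i : ℕ) - 1 := by
    have hu : (univ : Finset (Fin n)).filter (fun k => i < k ∧ k < j) = Ioo i j := by
      ext k; simp [mem_Ioo]
    have hsp : S.filter (fun k => i < k ∧ k < j) ∪ Sᶜ.filter (fun k => i < k ∧ k < j)
        = (univ : Finset (Fin n)).filter (fun k => i < k ∧ k < j) := by
      rw [← filter_union, union_compl]
    have hd : Disjoint (S.filter (fun k => i < k ∧ k < j)) (Sᶜ.filter (fun k => i < k ∧ k < j)) :=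
      disjoint_filter_filter disjoint_compl_right
    rw [← card_union_of_disjoint hd, hsp, hu, Fin.card_Ioo]
  have hI2 : (Sᶜ.filter (· < j)).card
      = (Sᶜ.filter (· < i)).card + 1 + (Sᶜ.filter (fun k => i < k ∧ k < j)).card := by
    have hsp : Sᶜ.filter (· < j)
        = Sᶜ.filter (· < i) ∪ insert i (Sᶜ.filter (fun k => i < k ∧ k < j)) := by
      ext k
      simp only [mem_union, mem_insert, mem_filter, mem_compl]
      constructor
      · rintro ⟨hk, hkj⟩
        rcases lt_trichotomy k i with h | h | h
        · exact Or.inl ⟨hk, h⟩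
        · exact Or.inr (Or.inl h)
        · exact Or.inr (Or.inr ⟨hk, h, hkj⟩)
      · rintro (⟨hk, hki⟩ | rfl | ⟨hk, hik, hkj⟩)
        · exact ⟨hk, hki.trans hij⟩
        · exact ⟨hi, hij⟩
        · exact ⟨hk, hkj⟩
    have hd : Disjoint (Sᶜ.filter (· < i)) (insert i (Sᶜ.filter (fun k => i < k ∧ k < j))) := by
      rw [disjoint_left]
      intro k hk hk2
      have h1 := (mem_filter.mp hk).2
      rcases mem_insert.mp hk2 with rfl | hk3
      · exact absurd h1 (lt_irrefl _)
      · exact absurd ((mem_filter.mp hk3).2.1.trans h1) (lt_irrefl _)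
    have hni : i ∉ Sᶜ.filter (fun k => i < k ∧ k < j) := by
      simp [mem_filter]
    rw [hsp, card_union_of_disjoint hd, card_insert_of_notMem hni]
    omega
  have hij' : (i : ℕ) < (j : ℕ) := hij
  rw [Nat.even_iff]
  omega

lemma gale_iff (S : Finset (Fin n)) :
    (∀ i j : Fin n, i ∉ S → j ∉ S → i < j →
        Even ((S.filter (fun k => i < k ∧ k < j)).card))
      ↔ pall (Sᶜ.image (fun x : Fin n => (x : ℕ))) := by
  constructor
  · intro hg t ht t' ht'
    rw [mem_image] at ht ht'
    obtain ⟨a, ha, rfl⟩ := ht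
    obtain ⟨b, hb, rfl⟩ := ht'
    rw [rk_map, rk_map]
    have ha' : a ∉ S := mem_compl.mp ha
    have hb' : b ∉ S := mem_compl.mp hb
    rcases lt_trichotomy a b with h | h | h
    · exact (pair_iff S ha' hb' h).mp (hg a b ha' hb' h)
    · rw [h]
    · exact ((pair_iff S hb' ha' h).mp (hg b a hb' ha' h)).symm
  · intro hP i j hi hj hij
    apply (pair_iff S hi hj hij).mpr
    have h1 := hP (i : ℕ) (mem_image_of_mem _ (mem_compl.mpr hi))
      (j : ℕ) (mem_image_of_mem _ (mem_compl.mpr hj))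
    rwa [rk_map, rk_map] at h1

end FinBridge

lemma attachFin_image_val {n : ℕ} (T : Finset (Fin n))
    (h : ∀ x ∈ T.image (fun x : Fin n => (x : ℕ)), x < n) :
    (T.image (fun x : Fin n => (x : ℕ))).attachFin h = T := by
  ext x
  rw [mem_attachFin, mem_image]
  constructor
  · rintro ⟨a, ha, hv⟩
    exact Fin.val_injective hv ▸ ha
  · intro hx
    exact ⟨x, hx, rfl⟩

end CycAux

open Finset CycAux in
/-- The number of facets of the cyclic `d`-polytope with `n` vertices is
`C(n - ⌊(d+1)/2⌋, n - d) + C(n - ⌊(d+2)/2⌋, n - d)`.  By Gale's evenness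
condition, the facets of `C(n, d)` correspond exactly to the `d`-element
subsets `S` of the `n` (linearly ordered) vertices such that any two elements
outside `S` have an even number of elements of `S` between them. -/
theorem cyclic_polytope_facet_count (d n : ℕ) (hd : 2 ≤ d) (hn : d + 1 ≤ n) :
    Nat.card {S : Finset (Fin n) // S.card = d ∧
        ∀ i j : Fin n, i ∉ S → j ∉ S → i < j →
          Even ((S.filter (fun k => i < k ∧ k < j)).card)} =
      (n - (d + 1) / 2).choose (n - d) + (n - (d + 2) / 2).choose (n - d) := by
  set m := n - d with hm'
  have hm : 1 ≤ m := by omega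
  rw [Nat.card_eq_fintype_card, Fintype.card_subtype]
  have hb : (univ.filter (fun S : Finset (Fin n) => S.card = d ∧
        ∀ i j : Fin n, i ∉ S → j ∉ S → i < j →
          Even ((S.filter (fun k => i < k ∧ k < j)).card))).card
      = (((range n).powersetCard m).filter pall).card := by
    apply card_bij' (fun S _ => Sᶜ.image (fun x : Fin n => (x : ℕ)))
      (fun A hA => ((A.attachFin (fun x hx =>
        mem_range.mp ((mem_powersetCard.mp (mem_filter.mp hA).1).1 hx)))ᶜ))
    · -- left_inv
      intro S _
      rw [attachFin_image_val, compl_compl]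
    · -- right_inv
      intro A _
      rw [compl_compl, CycAux.image_val_attachFin]
    · -- hi
      intro S hS
      simp only [mem_filter, mem_univ, true_and] at hS
      obtain ⟨hcard, hg⟩ := hS
      rw [mem_filter, mem_powersetCard]
      refine ⟨⟨?_, ?_⟩, (gale_iff S).mp hg⟩
      · intro y hy
        rw [mem_image] at hy
        obtain ⟨x, _, rfl⟩ := hy
        exact mem_range.mpr x.isLt
      · rw [card_image_of_injective _ Fin.val_injective, card_compl, Fintype.card_fin, hcard]
    · -- hj
      intro A hA
      have hA' := hA
      rw [mem_filter, mem_powersetCard] at hA'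
      obtain ⟨⟨hsub, hcard⟩, hP⟩ := hA'
      simp only [mem_filter, mem_univ, true_and]
      constructor
      · rw [card_compl, Fintype.card_fin, card_attachFin, hcard]
        omega
      · apply (gale_iff _).mpr
        rw [compl_compl, CycAux.image_val_attachFin]
        exact hP
  rw [hb, count_all n m hm]
  have e1 : (n + m) / 2 = n - (d + 1) / 2 := by omega
  have e2 : (n + m - 1) / 2 = n - (d + 2) / 2 := by omega
  rw [e1, e2]
end

section
/- Let (δ_0, ..., δ_d) be a symmetric sequence of nonnegative integers (δ_i = δ_{d-i} for all i) with δ_0 = 1, δ_1 = n - d - 1, and δ_i ≤ C(δ_1 + i - 1, i) for all i ≥ 1. Then δ_0 + δ_1 + ... + δ_d ≤ C(n - floor((d+1)/2), n-d) + C(n - floor((d+2)/2), n-d). -/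
/-- Hockey-stick identity: `∑_{i=0}^{r} C(a+i, i) = C(a+r+1, r)`. -/
lemma hockey_stick (a : ℕ) : ∀ r : ℕ,
    ∑ i ∈ Finset.range (r + 1), (a + i).choose i = (a + r + 1).choose r := by
  intro r
  induction r with
  | zero => simp
  | succ m ih =>
    rw [Finset.sum_range_succ, ih]
    simp only [← add_assoc]
    exact (Nat.choose_succ_succ (a + m + 1) m).symm

/-- Let `(δ_0, ..., δ_d)` be a symmetric sequence of nonnegative integers
(`δ_i = δ_{d-i}`) with `δ_0 = 1`, `δ_1 = n - d - 1`, and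
`δ_i ≤ C(δ_1 + i - 1, i)` for all `i ≥ 1`.  Then
`δ_0 + ⋯ + δ_d ≤ C(n - ⌊(d+1)/2⌋, n - d) + C(n - ⌊(d+2)/2⌋, n - d)`. -/
theorem symmetric_delta_sum_bound (d n : ℕ) (δ : ℕ → ℕ)
    (hsym : ∀ i ≤ d, δ i = δ (d - i))
    (h0 : δ 0 = 1)
    (h1 : (δ 1 : ℤ) = (n : ℤ) - d - 1)
    (hub : ∀ i : ℕ, 1 ≤ i → δ i ≤ (δ 1 + i - 1).choose i) :
    ∑ i ∈ Finset.range (d + 1), δ i ≤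
      (n - (d + 1) / 2).choose (n - d) + (n - (d + 2) / 2).choose (n - d) := by
  have hn : n = δ 1 + d + 1 := by omega
  obtain ⟨k, hk⟩ : ∃ k, k = δ 1 := ⟨_, rfl⟩
  rcases Nat.eq_zero_or_pos d with rfl | hd
  · have e1 : n - (0 + 1) / 2 = n := by omega
    have h5 : (n - (0 + 1) / 2).choose (n - 0) = 1 := by
      rw [e1]; simp
    rw [Finset.sum_range_one, h0]
    omega
  rcases Nat.eq_zero_or_pos k with hk0 | hk1
  · exfalso
    have h2 := hub d hd
    have h3 := hsym d le_rfl
    rw [Nat.sub_self, h0] at h3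
    rw [← hk, hk0] at h2
    have h4 : (0 + d - 1).choose d = 0 := Nat.choose_eq_zero_of_lt (by omega)
    omega
  have hbound : ∀ i, δ i ≤ (k - 1 + i).choose i := by
    intro i
    rcases Nat.eq_zero_or_pos i with rfl | hi
    · simp [h0]
    · have h2 := hub i hi
      rw [← hk] at h2
      have e : k + i - 1 = k - 1 + i := by omega
      rwa [e] at h2
  obtain ⟨t, htdef⟩ : ∃ t, t = (d + 2) / 2 := ⟨_, rfl⟩
  have ht1 : t ≤ d := by omega
  have ht0 : 1 ≤ t := by omega
  rw [← Finset.sum_range_add_sum_Ico _ (by omega : t ≤ d + 1)]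
  have hA : ∑ i ∈ Finset.range t, δ i ≤ (k - 1 + t).choose (t - 1) := by
    calc ∑ i ∈ Finset.range t, δ i
        ≤ ∑ i ∈ Finset.range t, (k - 1 + i).choose i :=
          Finset.sum_le_sum fun i _ => hbound i
      _ = (k - 1 + t).choose (t - 1) := by
          have h5 := hockey_stick (k - 1) (t - 1)
          rw [show t - 1 + 1 = t by omega] at h5
          rw [show k - 1 + (t - 1) + 1 = k - 1 + t by omega] at h5
          exact h5
  have hB : ∑ i ∈ Finset.Ico t (d + 1), δ i ≤ (k + (d - t)).choose (d - t) := by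
    have step1 : ∑ i ∈ Finset.Ico t (d + 1), δ i
        ≤ ∑ i ∈ Finset.Ico t (d + 1), (k - 1 + (d - i)).choose (d - i) := by
      apply Finset.sum_le_sum
      intro i hi
      rw [Finset.mem_Ico] at hi
      rw [hsym i (by omega)]
      exact hbound (d - i)
    refine step1.trans ?_
    rw [Finset.sum_Ico_eq_sum_range]
    rw [show d + 1 - t = (d - t) + 1 by omega]
    have e2 : ∀ j ∈ Finset.range (d - t + 1),
        (k - 1 + (d - (t + j))).choose (d - (t + j)) =
          (fun j => (k - 1 + j).choose j) (d - t + 1 - 1 - j) := by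
      intro j hj
      rw [Finset.mem_range] at hj
      simp only
      congr 1 <;> omega
    rw [Finset.sum_congr rfl e2,
      Finset.sum_range_reflect (fun j => (k - 1 + j).choose j) (d - t + 1)]
    have h6 := hockey_stick (k - 1) (d - t)
    rw [h6]
    apply Nat.le_of_eq
    congr 1
    omega
  have hT1 : (k - 1 + t).choose (t - 1) ≤ (n - (d + 1) / 2).choose (n - d) := by
    have e1 : n - (d + 1) / 2 = k + d / 2 + 1 := by omega
    have e2 : t - 1 = d / 2 := by omega
    have e3 : n - d = k + 1 := by omega
    rw [e1, e2, e3]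
    have e4 : (k + d / 2 + 1).choose (k + 1) = (k + d / 2 + 1).choose (d / 2) := by
      rw [← Nat.choose_symm (by omega : d / 2 ≤ k + d / 2 + 1)]
      congr 1
      omega
    rw [e4]
    exact Nat.choose_le_choose _ (by omega)
  have hT2 : (k + (d - t)).choose (d - t) ≤ (n - (d + 2) / 2).choose (n - d) := by
    have e1 : n - (d + 2) / 2 = k + (d - t) + 1 := by omega
    have e3 : n - d = k + 1 := by omega
    rw [e1, e3]
    have e4 : (k + (d - t) + 1).choose (k + 1) = (k + (d - t) + 1).choose (d - t) := by
      rw [← Nat.choose_symm (by omega : d - t ≤ k + (d - t) + 1)]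
      congr 1
      omega
    rw [e4]
    exact Nat.choose_le_choose _ (by omega)
  omega
end
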